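/- Let A be a commutative unitary ring with A ≠ {0}. Every λ-quiddity over A of size at least 5 that contains an entry equal to 0 is reducible. -/

import Mathlib

/-- The matrix `[[a, -1], [1, 0]]`. -/
def mMat {A : Type*} [CommRing A] (a : A) : Matrix (Fin 2) (Fin 2) A := !![a, -1; 1, 0]

/-- `M_n(a₁, …, aₙ) = mMat aₙ * ⋯ * mMat a₁`, for the tuple given as a list `[a₁, …, aₙ]`. -/
def mProd {A : Type*} [CommRing A] (l : List A) : Matrix (Fin 2) (Fin 2) A :=
  ((l.map mMat).reverse).prod

/-- The sum `(a₁,…,aₙ) ⊕ (b₁,…,b_m) = (a₁+b_m, a₂,…,a_{n−1}, aₙ+b₁, b₂,…,b_{m−1})`. -/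
def oplus {A : Type*} [CommRing A] (a b : List A) : List A :=
  (a.headD 0 + b.getLastD 0) ::
    (a.dropLast.tail ++ (a.getLastD 0 + b.headD 0) :: b.dropLast.tail)

/-- Two tuples are equivalent if one is a cyclic rotation of the other or of its reversal. -/
def TupEquiv {A : Type*} (a b : List A) : Prop :=
  (∃ k, b = a.rotate k) ∨ (∃ k, b = a.reverse.rotate k)

/-- A λ-quiddity over `R ⊆ A`: all entries lie in `R` and `M_n(a₁,…,aₙ) = ± Id`. -/
def IsQuiddity {A : Type*} [CommRing A] (R : Set A) (c : List A) : Prop :=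
  (∀ x ∈ c, x ∈ R) ∧ (mProd c = 1 ∨ mProd c = -1)

/-- A λ-quiddity `c` over `R` is reducible if `c ∼ a ⊕ b` with `a ∈ R^m`, `m ≥ 3`,
and `b` a λ-quiddity over `R` of size `l ≥ 3`. -/
def IsReducible {A : Type*} [CommRing A] (R : Set A) (c : List A) : Prop :=
  ∃ a b : List A, 3 ≤ a.length ∧ 3 ≤ b.length ∧ (∀ x ∈ a, x ∈ R) ∧
    IsQuiddity R b ∧ TupEquiv c (oplus a b)

/-- An irreducible λ-quiddity over `R`: a λ-quiddity of size `≥ 3` which is not reducible. -/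
def IrreducibleQuiddity {A : Type*} [CommRing A] (R : Set A) (c : List A) : Prop :=
  IsQuiddity R c ∧ 3 ≤ c.length ∧ ¬ IsReducible R c

/-- The continuant `K_i(a₁,…,a_i)`, determinant of the tridiagonal matrix with diagonal
`a₁,…,a_i` and off-diagonal entries `1`; `K₀ = 1`. -/
def cont {A : Type*} [CommRing A] : List A → A
  | [] => 1
  | [a] => a
  | a :: b :: l => a * cont (b :: l) - cont l


lemma oplus_key {A : Type*} [CommRing A] (x q r : A) (rs : List A) :
    oplus ((x + q) :: r :: rs) [0, q, 0, -q] = x :: r :: rs ++ [q, 0] := by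
  simp only [oplus, List.headD, List.getLastD_cons, List.getLastD_nil, List.dropLast, List.tail]
  have h1 : rs.getLastD r = (r :: rs).getLast (by simp) :=
    (List.getLast_eq_getLastD _).symm
  have h2 : (r :: rs).dropLast ++ (r :: rs).getLast (by simp) :: [q, 0]
      = (r :: rs) ++ [q, 0] := by
    rw [show ((r :: rs).getLast (by simp) :: [q, 0] : List A)
        = [(r :: rs).getLast (by simp)] ++ [q, 0] from rfl,
      ← List.append_assoc, List.dropLast_append_getLast]
  rw [h1, add_zero, h2]
  congr 1
  ring

lemma quid_key {A : Type*} [CommRing A] (q : A) :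
    IsQuiddity Set.univ [0, q, 0, -q] := by
  refine ⟨fun x _ => trivial, Or.inl ?_⟩
  simp only [mProd, List.map, List.reverse, List.prod]
  ext i j
  fin_cases i <;> fin_cases j <;>
    simp [mMat, Matrix.mul_apply, Fin.sum_univ_succ, Matrix.one_apply]

/-- Over a nontrivial commutative ring, every λ-quiddity of size at least 5 containing an
entry equal to `0` is reducible. -/
theorem stmt14 {A : Type*} [CommRing A] [Nontrivial A] (c : List A)
    (hc : IsQuiddity Set.univ c) (hlen : 5 ≤ c.length)
    (h : (0 : A) ∈ c) :
    IsReducible Set.univ c := by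
  obtain ⟨t₁, t₂, rfl⟩ := List.append_of_mem h
  have hrot : (t₁ ++ 0 :: t₂).rotate (t₁.length + 1) = (t₂ ++ t₁) ++ [0] := by
    have h0 : (t₁ ++ 0 :: t₂ : List A) = (t₁ ++ [0]) ++ t₂ := by simp
    have hl : (t₁ ++ [(0:A)]).length = t₁.length + 1 := by simp
    have hle : t₁.length + 1 ≤ ((t₁ ++ [(0:A)]) ++ t₂).length := by simp
    rw [h0, List.rotate_eq_drop_append_take hle, ← hl, List.drop_left, List.take_left]
    simp
  have helen : 4 ≤ (t₂ ++ t₁).length := by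
    simp only [List.length_append]
    simp only [List.length_append, List.length_cons] at hlen
    omega
  have hene : (t₂ ++ t₁) ≠ [] := by
    intro hh; rw [hh] at helen; simp at helen
  obtain ⟨d, q, hd⟩ : ∃ (d : List A) (q : A), t₂ ++ t₁ = d ++ [q] :=
    ⟨(t₂ ++ t₁).dropLast, (t₂ ++ t₁).getLast hene,
      (List.dropLast_append_getLast hene).symm⟩
  have hdlen : 3 ≤ d.length := by
    rw [hd] at helen; simp at helen; omega
  obtain ⟨x, r, rs, rfl⟩ : ∃ (x r : A) (rs : List A), d = x :: r :: rs := by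
    rcases d with _ | ⟨x, _ | ⟨r, rs⟩⟩
    · simp at hdlen
    · simp at hdlen
    · exact ⟨x, r, rs, rfl⟩
  refine ⟨(x + q) :: r :: rs, [0, q, 0, -q], by simp at hdlen ⊢; omega, by simp,
    fun x _ => trivial, quid_key q, Or.inl ⟨t₁.length + 1, ?_⟩⟩
  rw [hrot, oplus_key, hd]
  simp
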